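/- Let p be an odd prime, a ∈ ℤ with p ∤ a, and let u, w ∈ ℚ_p satisfy u + w = a, u·w = p with u a p-adic unit. Set N = 1 − a + p. Then the p-adic valuation of ((1 − u⁻¹)/(1 − w⁻¹)) · (1 − a/p + 1/p) equals 2·v_p(N). -/

import Mathlib

/-- Lemma 4.6 of the paper (case δ = 1): with `u, w` the unit and non-unit roots of
`1 - aT + pT²` and `N = 1 - a + p`, the `p`-adic valuation of
`((1 - u⁻¹)/(1 - w⁻¹)) · (1 - a/p + 1/p)` equals `2 v_p(N)`. -/
theorem valuation_unit_root_factor (p : ℕ) [Fact p.Prime] (hp : Odd p) (a : ℤ)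
    (ha : ¬ (p : ℤ) ∣ a) (u w : ℚ_[p]) (hsum : u + w = (a : ℚ_[p]))
    (hprod : u * w = (p : ℚ_[p])) (hu : ‖u‖ = 1) :
    ((1 - u⁻¹) / (1 - w⁻¹) * (1 - (a : ℚ_[p]) / (p : ℚ_[p]) + 1 / (p : ℚ_[p]))).valuation =
      2 * (((1 - a + p : ℤ) : ℚ_[p])).valuation := by
  have hp1 : (1 : ℝ) < p := Nat.one_lt_cast.2 (Fact.out : p.Prime).one_lt
  have hpne : (p : ℚ_[p]) ≠ 0 := Nat.cast_ne_zero.2 (Fact.out : p.Prime).ne_zero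
  have hu0 : u ≠ 0 := by intro h; simp [h] at hu
  have hw0 : w ≠ 0 := by intro h; rw [h, mul_zero] at hprod; exact hpne hprod.symm
  have hnw : ‖w‖ < 1 := by
    have h1 : ‖u * w‖ = ‖(p : ℚ_[p])‖ := by rw [hprod]
    rw [norm_mul, hu, one_mul] at h1
    rw [h1, Padic.norm_p]
    exact inv_lt_one_of_one_lt₀ hp1
  have h1w : ‖1 - w‖ = 1 := by
    rw [sub_eq_add_neg, Padic.add_eq_max_of_ne]
    · rw [norm_one, norm_neg]
      exact max_eq_left hnw.le
    · rw [norm_one, norm_neg]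
      exact (ne_of_gt hnw)
  have h1w0 : (1 : ℚ_[p]) - w ≠ 0 := by
    intro h; rw [h, norm_zero] at h1w; norm_num at h1w
  set c : ℚ_[p] := (1 - w) * u with hc
  have hc0 : c ≠ 0 := mul_ne_zero h1w0 hu0
  have hcn : ‖c‖ = 1 := by rw [hc, norm_mul, h1w, hu, one_mul]
  have hvc : c.valuation = 0 := by
    have h2 := Padic.norm_eq_zpow_neg_valuation hc0
    rw [hcn] at h2
    have h3 : ((p : ℝ) ^ (-c.valuation) : ℝ) = (p : ℝ) ^ (0 : ℤ) := by
      rw [← h2]; norm_num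
    have h4 := (zpow_right_strictMono₀ hp1).injective h3
    omega
  have hvcinv : c⁻¹.valuation = 0 := by
    have h1 : c * c⁻¹ = 1 := mul_inv_cancel₀ hc0
    have h2 : (c * c⁻¹).valuation = 0 := by rw [h1]; exact Padic.valuation_one
    rw [Padic.valuation_mul hc0 (inv_ne_zero hc0), hvc] at h2
    omega
  have hN : ((1 - a + p : ℤ) : ℚ_[p]) = (1 - u) * (1 - w) := by
    push_cast
    rw [← hsum, ← hprod]; ring
  have hw1 : (1 : ℚ_[p]) - w⁻¹ ≠ 0 := by
    intro h
    have : w⁻¹ = 1 := by linear_combination -h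
    have hw' : w = 1 := by
      have := congrArg (· * w) this
      simpa [inv_mul_cancel₀ hw0] using this.symm
    rw [hw'] at hnw; norm_num at hnw
  have hE : (1 - u⁻¹) / (1 - w⁻¹) * (1 - (a : ℚ_[p]) / (p : ℚ_[p]) + 1 / (p : ℚ_[p]))
      = (((1 - a + p : ℤ) : ℚ_[p]) * c⁻¹) ^ 2 := by
    rw [hN, hc, ← hsum, ← hprod]
    have huw0 : u * w ≠ 0 := mul_ne_zero hu0 hw0
    have hw1' : w - 1 ≠ 0 := fun h => h1w0 (by linear_combination -h)
    field_simp [hw1']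
    ring
  rw [hE]
  by_cases hNz : ((1 - a + p : ℤ) : ℚ_[p]) = 0
  · rw [hNz, zero_mul]
    simp [Padic.valuation_zero]
  · have hX : ((1 - a + p : ℤ) : ℚ_[p]) * c⁻¹ ≠ 0 :=
      mul_ne_zero hNz (inv_ne_zero hc0)
    rw [sq, Padic.valuation_mul hX hX,
      Padic.valuation_mul hNz (inv_ne_zero hc0), hvcinv]
    ring
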